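/- Under the Setup: let T : C(K) → X₊ be a bounded linear operator and let (f_m) be a bounded sequence of pairwise disjoint functions in C(K) (f_m·f_{m'} = 0 for m ≠ m'). Then for every ε > 0 there is k ∈ ℕ such that for all n > k and all m ∈ ℕ, dist(Pₙ(T(f_m)), Z) ≤ ε. -/

import Mathlib

open Filter Metric Topology BoundedContinuousFunction

set_option maxHeartbeats 1000000
set_option synthInstance.maxHeartbeats 400000

noncomputable section

/-- A bounded linear operator is weakly compact if the norm-closure of the image of the
closed unit ball is compact in the weak topology. -/
def IsWeaklyCompactOp {E F : Type*} [NormedAddCommGroup E] [NormedSpace ℝ E]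
    [NormedAddCommGroup F] [NormedSpace ℝ F] (T : E →L[ℝ] F) : Prop :=
  IsCompact (toWeakSpace ℝ F '' closure (T '' Metric.closedBall 0 1))

/-- A sequence generates a copy of `c₀` if it is equivalent to the standard basis of `c₀`. -/
def GeneratesC0 {X : Type*} [NormedAddCommGroup X] [NormedSpace ℝ X] (f : ℕ → X) : Prop :=
  ∃ c C : ℝ, 0 < c ∧ c ≤ C ∧ ∀ α : ℕ →₀ ℝ,
    c * (⨆ m, |α m|) ≤ ‖α.sum fun m a => a • f m‖ ∧
      ‖α.sum fun m a => a • f m‖ ≤ C * (⨆ m, |α m|)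

/-- The closed linear span of the characteristic functions of the members of a family
`Cal` of (clopen) subsets of `K`. -/
def Zspan (K : Type*) [TopologicalSpace K] [CompactSpace K] (Cal : Set (Set K)) :
    Submodule ℝ C(K, ℝ) :=
  (Submodule.span ℝ {g : C(K, ℝ) | ∃ b ∈ Cal, ∀ x, g x = Set.indicator b (fun _ => (1 : ℝ)) x}).topologicalClosure

section aux

variable {E : Type*} [NormedAddCommGroup E] [NormedSpace ℝ E]

lemma infDist_add_le' (Z : Submodule ℝ E) (x y : E) :
    Metric.infDist (x + y) (Z : Set E) ≤
      Metric.infDist x (Z : Set E) + Metric.infDist y (Z : Set E) := by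
  have hne : (Z : Set E).Nonempty := ⟨0, Z.zero_mem⟩
  by_contra h
  push_neg at h
  set ε := (Metric.infDist (x + y) (Z : Set E) -
    (Metric.infDist x (Z : Set E) + Metric.infDist y (Z : Set E))) with hε
  have hεpos : 0 < ε := by simp [hε]; linarith
  obtain ⟨z, hz, hxz⟩ := (Metric.infDist_lt_iff hne).mp
    (lt_add_of_pos_right (Metric.infDist x (Z : Set E)) (half_pos hεpos))
  obtain ⟨w, hw, hyw⟩ := (Metric.infDist_lt_iff hne).mp
    (lt_add_of_pos_right (Metric.infDist y (Z : Set E)) (half_pos hεpos))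
  have hle : Metric.infDist (x + y) (Z : Set E) ≤ dist (x + y) (z + w) :=
    Metric.infDist_le_dist_of_mem (Z.add_mem hz hw)
  have htri : dist (x + y) (z + w) ≤ dist x z + dist y w := by
    simpa [dist_eq_norm, add_sub_add_comm] using norm_add_le (x - z) (y - w)
  linarith

lemma infDist_smul_le' (c : ℝ) (Z : Submodule ℝ E) (x : E) :
    Metric.infDist (c • x) (Z : Set E) ≤ (|c| + 1) * Metric.infDist x (Z : Set E) := by
  have hne : (Z : Set E).Nonempty := ⟨0, Z.zero_mem⟩
  by_contra h
  push_neg at h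
  have h0 : 0 ≤ Metric.infDist x (Z : Set E) := Metric.infDist_nonneg
  have hεpos : 0 < (Metric.infDist (c • x) (Z : Set E) -
      (|c| + 1) * Metric.infDist x (Z : Set E)) / (|c| + 1) := by
    have : (0:ℝ) < |c| + 1 := by positivity
    apply div_pos _ this
    linarith
  obtain ⟨z, hz, hxz⟩ := (Metric.infDist_lt_iff hne).mp
    (lt_add_of_pos_right (Metric.infDist x (Z : Set E)) hεpos)
  have hle : Metric.infDist (c • x) (Z : Set E) ≤ dist (c • x) (c • z) :=
    Metric.infDist_le_dist_of_mem (Z.smul_mem c hz)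
  have heq : dist (c • x) (c • z) = |c| * dist x z := by
    simp [dist_eq_norm, ← smul_sub, norm_smul, Real.norm_eq_abs]
  have hc1 : |c| ≤ |c| + 1 := by linarith
  have habs : (0:ℝ) ≤ |c| := abs_nonneg c
  have hd : (0:ℝ) ≤ dist x z := dist_nonneg
  have : Metric.infDist (c • x) (Z : Set E) ≤ (|c| + 1) * dist x z := by
    calc Metric.infDist (c • x) (Z : Set E) ≤ |c| * dist x z := hle.trans_eq heq
    _ ≤ (|c| + 1) * dist x z := by nlinarith
  have hxz' : dist x z < Metric.infDist x (Z : Set E) +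
      (Metric.infDist (c • x) (Z : Set E) - (|c| + 1) * Metric.infDist x (Z : Set E)) / (|c| + 1) := hxz
  have hpos : (0:ℝ) < |c| + 1 := by positivity
  rw [mul_comm] at this
  have := this.trans_lt (mul_lt_mul_of_pos_right hxz' hpos)
  rw [add_mul, div_mul_cancel₀] at this
  · linarith
  · positivity

end aux

/-- The Banach space `X₊` of all bounded sequences `(fₙ)` in `C(K,ℝ)` with
`dist (fₙ, Z) → 0`, realized as a submodule of the space of bounded functions `ℕ →ᵇ C(K,ℝ)`. -/
def Xplus (K : Type*) [TopologicalSpace K] [CompactSpace K] (Cal : Set (Set K)) :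
    Submodule ℝ (lp (fun _ : ℕ => C(K, ℝ)) ⊤) where
  carrier := {f | Tendsto (fun n => Metric.infDist (f n) ((Zspan K Cal : Submodule ℝ C(K, ℝ)) : Set C(K, ℝ))) atTop (𝓝 0)}
  zero_mem' := by
    have h : (fun n : ℕ => Metric.infDist ((0 : lp (fun _ : ℕ => C(K, ℝ)) ⊤) n)
        ((Zspan K Cal : Submodule ℝ C(K,ℝ)) : Set C(K, ℝ))) = fun _ => (0:ℝ) := by
      funext n
      simp only [lp.coeFn_zero, Pi.zero_apply]
      exact Metric.infDist_zero_of_mem (Zspan K Cal).zero_mem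
    simp only [Set.mem_setOf_eq, h]
    exact tendsto_const_nhds
  add_mem' := by
    intro f g hf hg
    simp only [Set.mem_setOf_eq] at hf hg ⊢
    have h0 : ∀ n, (0:ℝ) ≤ Metric.infDist ((f + g) n) ((Zspan K Cal : Submodule ℝ C(K,ℝ)) : Set C(K, ℝ)) :=
      fun n => Metric.infDist_nonneg
    refine squeeze_zero h0 (fun n => ?_) (by simpa using hf.add hg)
    simpa using infDist_add_le' (Zspan K Cal) (f n) (g n)
  smul_mem' := by
    intro c f hf
    simp only [Set.mem_setOf_eq] at hf ⊢
    have h0 : ∀ n, (0:ℝ) ≤ Metric.infDist ((c • f) n) ((Zspan K Cal : Submodule ℝ C(K,ℝ)) : Set C(K, ℝ)) :=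
      fun n => Metric.infDist_nonneg
    exact squeeze_zero h0
      (fun n => by simpa using infDist_smul_le' c (Zspan K Cal) (f n))
      (by simpa using hf.const_mul (|c| + 1))

/-- The subspace `Y₊ = {(fₙ) ∈ X₊ : f₀ vanishes on K₁}`. -/
def Yplus (K : Type*) [TopologicalSpace K] [CompactSpace K] (Cal : Set (Set K))
    (K₁ : Set K) : Submodule ℝ ↥(Xplus K Cal) where
  carrier := {f | ∀ x ∈ K₁, ((f : lp (fun _ : ℕ => C(K, ℝ)) ⊤) 0) x = 0}
  zero_mem' := by intro x hx; simp
  add_mem' := by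
    intro f g hf hg x hx
    have := hf x hx
    have := hg x hx
    simp_all
  smul_mem' := by
    intro c f hf x hx
    have := hf x hx
    simp_all

/-- The space `X₀` of sequences in `C(K,ℝ)` converging to `0` in norm. -/
def Xzero (K : Type*) [TopologicalSpace K] [CompactSpace K] :
    Submodule ℝ (lp (fun _ : ℕ => C(K, ℝ)) ⊤) where
  carrier := {f | Tendsto (fun n => ‖f n‖) atTop (𝓝 0)}
  zero_mem' := by
    simp only [Set.mem_setOf_eq, lp.coeFn_zero, Pi.zero_apply, norm_zero]
    exact tendsto_const_nhds
  add_mem' := by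
    intro f g hf hg
    simp only [Set.mem_setOf_eq] at hf hg ⊢
    refine squeeze_zero (fun n => norm_nonneg _) (fun n => ?_) (by simpa using hf.add hg)
    simpa using norm_add_le (f n) (g n)
  smul_mem' := by
    intro c f hf
    simp only [Set.mem_setOf_eq] at hf ⊢
    refine squeeze_zero (fun n => norm_nonneg _) (fun n => ?_) (by simpa using hf.const_mul ‖c‖)
    simp [norm_smul]


set_option linter.unusedSectionVars false
section Chi

attribute [local instance] Classical.propDecidable

variable {K : Type*} [TopologicalSpace K]

/-- Characteristic function of a clopen set as a continuous map (junk value `0` otherwise). -/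
noncomputable def chi (b : Set K) : C(K, ℝ) :=
  if hb : IsClopen b then ((LocallyConstant.charFn ℝ hb : LocallyConstant K ℝ) : C(K, ℝ)) else 0

lemma chi_apply {b : Set K} (hb : IsClopen b) (x : K) :
    chi b x = if x ∈ b then (1 : ℝ) else 0 := by
  simp only [chi, dif_pos hb]
  change (LocallyConstant.charFn ℝ hb : K → ℝ) x = _
  rw [LocallyConstant.coe_charFn]
  simp [Set.indicator_apply]

lemma chi_apply_mem {b : Set K} (hb : IsClopen b) {x : K} (hx : x ∈ b) : chi b x = 1 := by
  rw [chi_apply hb, if_pos hx]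

lemma chi_apply_not_mem {b : Set K} (hb : IsClopen b) {x : K} (hx : x ∉ b) : chi b x = 0 := by
  rw [chi_apply hb, if_neg hx]

variable [CompactSpace K]

lemma norm_chi_le (b : Set K) : ‖chi b‖ ≤ 1 := by
  by_cases hb : IsClopen b
  · refine (ContinuousMap.norm_le _ zero_le_one).mpr fun x => ?_
    rw [chi_apply hb]
    split <;> simp
  · simp [chi, dif_neg hb]

lemma chi_union {b c : Set K} (hb : IsClopen b) (hc : IsClopen c) (hdisj : Disjoint b c) :
    chi (b ∪ c) = chi b + chi c := by
  ext x

  rw [ContinuousMap.add_apply, chi_apply (hb.union hc), chi_apply hb, chi_apply hc]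
  by_cases hxb : x ∈ b
  · have hxc : x ∉ c := fun hxc => Set.disjoint_left.mp hdisj hxb hxc
    simp [hxb, hxc]
  · by_cases hxc : x ∈ c <;> simp [hxb, hxc]

lemma chi_diff {c s : Set K} (hc : IsClopen c) (hs : IsClopen s) (hcs : c ⊆ s) :
    chi s = chi c + chi (s \ c) := by
  have h := chi_union hc (hs.diff hc) (Set.disjoint_sdiff_right.mono_left le_rfl)
  rwa [Set.union_diff_cancel hcs] at h

end Chi
set_option linter.unusedSectionVars false

section VV

variable {K : Type*} [TopologicalSpace K] [CompactSpace K]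

/-- Variation of the functional `ζ` over the set `b`. -/
noncomputable def vv (ζ : C(K, ℝ) →L[ℝ] ℝ) (b : Set K) : ℝ :=
  sSup {r : ℝ | ∃ g : C(K, ℝ), ‖g‖ ≤ 1 ∧ (∀ x ∉ b, g x = 0) ∧ ζ g = r}

lemma vv_set_nonempty (ζ : C(K, ℝ) →L[ℝ] ℝ) (b : Set K) :
    {r : ℝ | ∃ g : C(K, ℝ), ‖g‖ ≤ 1 ∧ (∀ x ∉ b, g x = 0) ∧ ζ g = r}.Nonempty :=
  ⟨0, 0, by simp, fun x _ => rfl, map_zero ζ⟩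

lemma vv_set_bddAbove (ζ : C(K, ℝ) →L[ℝ] ℝ) (b : Set K) :
    BddAbove {r : ℝ | ∃ g : C(K, ℝ), ‖g‖ ≤ 1 ∧ (∀ x ∉ b, g x = 0) ∧ ζ g = r} := by
  refine ⟨‖ζ‖, fun r hr => ?_⟩
  obtain ⟨g, hg1, _, rfl⟩ := hr
  calc ζ g ≤ |ζ g| := le_abs_self _
  _ ≤ ‖ζ‖ * ‖g‖ := ζ.le_opNorm g
  _ ≤ ‖ζ‖ * 1 := by
      exact mul_le_mul_of_nonneg_left hg1 (norm_nonneg ζ)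
  _ = ‖ζ‖ := mul_one _

lemma le_vv {ζ : C(K, ℝ) →L[ℝ] ℝ} {b : Set K} {g : C(K, ℝ)} (hg1 : ‖g‖ ≤ 1)
    (hgs : ∀ x ∉ b, g x = 0) : ζ g ≤ vv ζ b :=
  le_csSup (vv_set_bddAbove ζ b) ⟨g, hg1, hgs, rfl⟩

lemma vv_nonneg (ζ : C(K, ℝ) →L[ℝ] ℝ) (b : Set K) : 0 ≤ vv ζ b := by
  have := le_vv (ζ := ζ) (b := b) (g := 0) (by simp) (fun x _ => rfl)
  simpa using this

lemma vv_le_norm (ζ : C(K, ℝ) →L[ℝ] ℝ) (b : Set K) : vv ζ b ≤ ‖ζ‖ := by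
  refine csSup_le (vv_set_nonempty ζ b) fun r hr => ?_
  obtain ⟨g, hg1, _, rfl⟩ := hr
  calc ζ g ≤ |ζ g| := le_abs_self _
  _ ≤ ‖ζ‖ * ‖g‖ := ζ.le_opNorm g
  _ ≤ ‖ζ‖ * 1 := mul_le_mul_of_nonneg_left hg1 (norm_nonneg ζ)
  _ = ‖ζ‖ := mul_one _

lemma vv_mono (ζ : C(K, ℝ) →L[ℝ] ℝ) {b b' : Set K} (h : b ⊆ b') : vv ζ b ≤ vv ζ b' := by
  refine csSup_le_csSup (vv_set_bddAbove ζ b') (vv_set_nonempty ζ b) ?_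
  rintro r ⟨g, hg1, hgs, rfl⟩
  exact ⟨g, hg1, fun x hx => hgs x (fun hxb => hx (h hxb)), rfl⟩

lemma abs_apply_chi_le_vv (ζ : C(K, ℝ) →L[ℝ] ℝ) {b : Set K} (hb : IsClopen b) :
    |ζ (chi b)| ≤ vv ζ b := by
  have hs : ∀ x ∉ b, (chi b) x = 0 := fun x hx => chi_apply_not_mem hb hx
  have h1 : ζ (chi b) ≤ vv ζ b := le_vv (norm_chi_le b) hs
  have h2 : -ζ (chi b) ≤ vv ζ b := by
    have : ζ (-(chi b)) ≤ vv ζ b :=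
      le_vv (by simpa using norm_chi_le b) (fun x hx => by simp [hs x hx])
    simpa using this
  exact abs_le.mpr ⟨by linarith, h1⟩

lemma vv_superadd (ζ : C(K, ℝ) →L[ℝ] ℝ) {b c : Set K} (hdisj : Disjoint b c) :
    vv ζ b + vv ζ c ≤ vv ζ (b ∪ c) := by
  refine le_of_forall_pos_le_add fun η hη => ?_
  obtain ⟨r₁, hr₁mem, hr₁⟩ := exists_lt_of_lt_csSup (vv_set_nonempty ζ b)
    (show vv ζ b - η / 2 < vv ζ b by linarith)
  obtain ⟨r₂, hr₂mem, hr₂⟩ := exists_lt_of_lt_csSup (vv_set_nonempty ζ c)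
    (show vv ζ c - η / 2 < vv ζ c by linarith)
  obtain ⟨g₁, hg₁1, hg₁s, rfl⟩ := hr₁mem
  obtain ⟨g₂, hg₂1, hg₂s, rfl⟩ := hr₂mem
  have hnorm : ‖g₁ + g₂‖ ≤ 1 := by
    refine (ContinuousMap.norm_le _ zero_le_one).mpr fun x => ?_
    by_cases hxb : x ∈ b
    · have hxc : x ∉ c := fun hxc => Set.disjoint_left.mp hdisj hxb hxc
      have := g₁.norm_coe_le_norm x
      simp only [ContinuousMap.add_apply, hg₂s x hxc, add_zero]
      exact le_trans this hg₁1
    · by_cases hxc : x ∈ c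
      · have := g₂.norm_coe_le_norm x
        simp only [ContinuousMap.add_apply, hg₁s x hxb, zero_add]
        exact le_trans this hg₂1
      · simp [ContinuousMap.add_apply, hg₁s x hxb, hg₂s x hxc]
  have hsupp : ∀ x ∉ b ∪ c, (g₁ + g₂) x = 0 := by
    intro x hx
    simp [ContinuousMap.add_apply, hg₁s x (fun h => hx (Set.mem_union_left _ h)),
      hg₂s x (fun h => hx (Set.mem_union_right _ h))]
  have := le_vv (ζ := ζ) hnorm hsupp
  rw [map_add] at this
  linarith

lemma vv_sum_le (ζ : C(K, ℝ) →L[ℝ] ℝ) (d : ℕ → Set K) (t : ℕ)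
    (hdisj : ∀ s < t, ∀ s' < t, s ≠ s' → Disjoint (d s) (d s')) :
    ∑ s ∈ Finset.range t, vv ζ (d s) ≤ ‖ζ‖ := by
  have key : ∀ u : ℕ, u ≤ t → ∑ s ∈ Finset.range u, vv ζ (d s) ≤ vv ζ (⋃ s ∈ Finset.range u, d s) := by
    intro u
    induction u with
    | zero => intro _; simp [vv_nonneg]
    | succ u ih =>
      intro hu
      have hut : u ≤ t := Nat.le_of_succ_le hu
      have hdis : Disjoint (⋃ s ∈ Finset.range u, d s) (d u) := by
        refine Set.disjoint_left.mpr fun x hx hxu => ?_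
        simp only [Set.mem_iUnion] at hx
        obtain ⟨s, hs, hxs⟩ := hx
        have hs' : s < t := lt_of_lt_of_le (Finset.mem_range.mp hs) hut
        exact Set.disjoint_left.mp
          (hdisj s hs' u (lt_of_lt_of_le (Nat.lt_succ_self u) hu) (Nat.ne_of_lt (Finset.mem_range.mp hs))) hxs hxu
      calc ∑ s ∈ Finset.range (u + 1), vv ζ (d s)
          = (∑ s ∈ Finset.range u, vv ζ (d s)) + vv ζ (d u) := Finset.sum_range_succ _ u
        _ ≤ vv ζ (⋃ s ∈ Finset.range u, d s) + vv ζ (d u) := by linarith [ih hut]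
        _ ≤ vv ζ ((⋃ s ∈ Finset.range u, d s) ∪ d u) := vv_superadd ζ hdis
        _ = vv ζ (⋃ s ∈ Finset.range (u + 1), d s) := by
            congr 1
            ext x
            simp [Finset.mem_range, Nat.lt_succ_iff_lt_or_eq]
            constructor
            · rintro (⟨i, hi, hx⟩ | hx)
              · exact ⟨i, hi.le, hx⟩
              · exact ⟨u, le_rfl, hx⟩
            · rintro ⟨i, hi, hx⟩
              rcases Nat.lt_or_eq_of_le hi with hi | rfl
              · exact Or.inl ⟨i, hi, hx⟩
              · exact Or.inr hx
  exact le_trans (key t le_rfl) (vv_le_norm ζ _)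

end VV
section ClopenTools

variable {K : Type*} [TopologicalSpace K] [CompactSpace K] [T2Space K] [TotallyDisconnectedSpace K]

lemma exists_clopen_between {s U : Set K} (hs : IsCompact s) (hU : IsOpen U) (hsU : s ⊆ U) :
    ∃ v : Set K, IsClopen v ∧ s ⊆ v ∧ v ⊆ U := by
  have hx : ∀ x : K, x ∈ s → ∃ v : Set K, IsClopen v ∧ x ∈ v ∧ v ⊆ U := fun x hxs =>
    compact_exists_isClopen_in_isOpen hU (hsU hxs)
  choose! V hV1 hV2 hV3 using hx
  obtain ⟨t, ht⟩ := hs.elim_finite_subcover (fun x : s => V x)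
    (fun x => (hV1 x x.2).2) (fun x hxs => Set.mem_iUnion.mpr ⟨⟨x, hxs⟩, hV2 x hxs⟩)
  refine ⟨⋃ i ∈ t, V i, ?_, ht, ?_⟩
  · exact isClopen_biUnion_finset (fun i _ => hV1 i i.2)
  · exact Set.iUnion₂_subset fun i _ => hV3 i i.2

end ClopenTools
section Mass

attribute [local instance] Classical.propDecidable

variable {K : Type*} [TopologicalSpace K] [CompactSpace K] [T2Space K] [TotallyDisconnectedSpace K]

lemma cm_sum_apply {ι : Type*} (s : Finset ι) (f : ι → C(K, ℝ)) (x : K) :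
    (∑ i ∈ s, f i) x = ∑ i ∈ s, f i x := by
  classical
  induction s using Finset.induction_on with
  | empty => simp
  | @insert a S ha ih => rw [Finset.sum_insert ha, ContinuousMap.add_apply, ih, Finset.sum_insert ha]

lemma chi_empty : chi (∅ : Set K) = 0 := by
  ext x
  rw [chi_apply isClopen_empty]
  simp

lemma chi_finset_sum {ι : Type*} (S : Finset ι) (d : ι → Set K)
    (hclopen : ∀ i ∈ S, IsClopen (d i))
    (hdisj : ∀ i ∈ S, ∀ j ∈ S, i ≠ j → Disjoint (d i) (d j)) :
    chi (⋃ i ∈ S, d i) = ∑ i ∈ S, chi (d i) := by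
  classical
  induction S using Finset.induction_on with
  | empty => simp [chi_empty]
  | @insert a S ha ih =>
    have hSclopen : IsClopen (⋃ i ∈ S, d i) :=
      isClopen_biUnion_finset (fun i hi => hclopen i (Finset.mem_insert_of_mem hi))
    have hdisjA : Disjoint (d a) (⋃ i ∈ S, d i) := by
      refine Set.disjoint_left.mpr fun x hx hx' => ?_
      simp only [Set.mem_iUnion] at hx'
      obtain ⟨i, hi, hxi⟩ := hx'
      exact Set.disjoint_left.mp
        (hdisj a (Finset.mem_insert_self a S) i (Finset.mem_insert_of_mem hi)
          (fun h => ha (h ▸ hi))) hx hxi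
    rw [Finset.set_biUnion_insert, chi_union (hclopen a (Finset.mem_insert_self a S)) hSclopen hdisjA,
      Finset.sum_insert ha, ih (fun i hi => hclopen i (Finset.mem_insert_of_mem hi))
        (fun i hi j hj hij => hdisj i (Finset.mem_insert_of_mem hi) j (Finset.mem_insert_of_mem hj) hij)]

lemma exists_clopen_mass (ζ : C(K, ℝ) →L[ℝ] ℝ) (h : C(K, ℝ)) {a : Set K} (ha : IsClopen a)
    {C₀ ε' : ℝ} (hC₀ : 0 < C₀) (hh : ‖h‖ ≤ C₀) (hε' : 0 < ε')
    (hval : ε' ≤ ζ (h * chi a)) :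
    ∃ c : Set K, IsClopen c ∧ c ⊆ a ∧ ε' / (4 * C₀) ≤ |ζ (chi c)| := by
  classical
  set η : ℝ := ε' / (2 * (‖ζ‖ + 1)) with hη_def
  have hζ0 : (0:ℝ) < ‖ζ‖ + 1 := by positivity
  have hη : 0 < η := by positivity
  have hcov : ∀ x : K, x ∈ a → ∃ w : Set K, IsClopen w ∧ x ∈ w ∧
      w ⊆ a ∩ (⇑h)⁻¹' Metric.ball (h x) η := by
    intro x hx
    refine compact_exists_isClopen_in_isOpen (ha.2.inter (h.continuous.isOpen_preimage _
      Metric.isOpen_ball)) ⟨hx, ?_⟩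
    simp [Metric.mem_ball, hη]
  choose! W hW1 hW2 hW3 using hcov
  have hacomp : IsCompact a := ha.1.isCompact
  obtain ⟨t, ht⟩ := hacomp.elim_finite_subcover (fun x : a => W x)
    (fun x => (hW1 x x.2).2) (fun x hx => Set.mem_iUnion.mpr ⟨⟨x, hx⟩, hW2 x hx⟩)
  set l : List a := t.toList with hl_def
  set n : ℕ := l.length with hn_def
  set e : ℕ → Set K := fun i => if hi : i < n then W (l.get ⟨i, hi⟩) else ∅ with he_def
  set β : ℕ → ℝ := fun i => if hi : i < n then h ((l.get ⟨i, hi⟩ : a) : K) else 0 with hβ_def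
  set d : ℕ → Set K := fun i => e i \ ⋃ j ∈ Finset.range i, e j with hd_def
  have he_clopen : ∀ i, IsClopen (e i) := by
    intro i
    by_cases hi : i < n
    · simp only [he_def, dif_pos hi]
      exact hW1 _ (l.get ⟨i, hi⟩).2
    · simp only [he_def, dif_neg hi]
      exact isClopen_empty
  have he_sub_a : ∀ i, e i ⊆ a := by
    intro i
    by_cases hi : i < n
    · simp only [he_def, dif_pos hi]
      exact fun x hx => ((hW3 _ (l.get ⟨i, hi⟩).2) hx).1
    · simp only [he_def, dif_neg hi]
      exact Set.empty_subset a
  have hd_clopen : ∀ i, IsClopen (d i) :=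
    fun i => (he_clopen i).diff (isClopen_biUnion_finset (fun j _ => he_clopen j))
  have hd_sub_e : ∀ i, d i ⊆ e i := fun i => Set.diff_subset
  have hd_sub_a : ∀ i, d i ⊆ a := fun i => (hd_sub_e i).trans (he_sub_a i)
  have hd_disj : ∀ i j, i ≠ j → Disjoint (d i) (d j) := by
    have key : ∀ i j, i < j → Disjoint (d i) (d j) := by
      intro i j hij
      refine Set.disjoint_left.mpr fun x hxi hxj => ?_
      exact hxj.2 (Set.mem_biUnion (Finset.mem_range.mpr hij) (hd_sub_e i hxi))
    intro i j hij
    rcases lt_or_gt_of_ne hij with h' | h'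
    · exact key i j h'
    · exact (key j i h').symm
  have hmem_d : ∀ x ∈ a, ∃ N < n, x ∈ d N ∧ ∀ i, x ∈ d i → i = N := by
    intro x hx
    have hex : ∃ i, x ∈ e i := by
      obtain ⟨y, hy, hxy⟩ := Set.mem_iUnion₂.mp (ht hx)
      obtain ⟨k, hk⟩ := List.mem_iff_get.mp (Finset.mem_toList.mpr hy)
      refine ⟨k.1, ?_⟩
      have hkn : k.1 < n := k.2
      simp only [he_def, dif_pos hkn]
      have : l.get ⟨k.1, hkn⟩ = y := by
        convert hk using 2
      rw [this]
      exact hxy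
    set N := Nat.find hex with hN_def
    have hxN : x ∈ e N := Nat.find_spec hex
    have hNn : N < n := by
      by_contra hNn
      rw [he_def] at hxN
      simp only [dif_neg hNn] at hxN
      exact hxN
    have hxdN : x ∈ d N := by
      refine ⟨hxN, fun hmem => ?_⟩
      simp only [Set.mem_iUnion] at hmem
      obtain ⟨j, hj, hxj⟩ := hmem
      exact Nat.find_min hex (Finset.mem_range.mp hj) hxj
    refine ⟨N, hNn, hxdN, fun i hxi => ?_⟩
    by_contra hiN
    exact Set.disjoint_left.mp (hd_disj i N hiN) hxi hxdN
  set g : C(K, ℝ) := ∑ i ∈ Finset.range n, β i • chi (d i) with hg_def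
  have hg_apply : ∀ x, g x = ∑ i ∈ Finset.range n, β i * chi (d i) x := by
    intro x
    rw [hg_def, cm_sum_apply]
    exact Finset.sum_congr rfl fun i _ => ContinuousMap.smul_apply _ _ _
  have happrox : ‖h * chi a - g‖ ≤ η := by
    refine (ContinuousMap.norm_le _ hη.le).mpr fun x => ?_
    rw [ContinuousMap.sub_apply, ContinuousMap.mul_apply]
    by_cases hx : x ∈ a
    · obtain ⟨N, hNn, hxdN, huniq⟩ := hmem_d x hx
      have hgx : g x = β N := by
        rw [hg_apply]
        rw [Finset.sum_eq_single N]
        · rw [chi_apply_mem (hd_clopen N) hxdN, mul_one]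
        · intro i hi hiN
          rw [chi_apply_not_mem (hd_clopen i) (fun hxi => hiN (huniq i hxi)), mul_zero]
        · intro hN
          exact absurd (Finset.mem_range.mpr hNn) hN
      rw [hgx, chi_apply_mem ha hx, mul_one]
      have hxe : x ∈ e N := hd_sub_e N hxdN
      rw [he_def] at hxe
      simp only [dif_pos hNn] at hxe
      have hball := (hW3 _ (l.get ⟨N, hNn⟩).2 hxe).2
      simp only [Set.mem_preimage, Metric.mem_ball, Real.dist_eq] at hball
      rw [hβ_def]
      simp only [dif_pos hNn]
      rw [Real.norm_eq_abs]
      exact le_of_lt hball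
    · have hgx : g x = 0 := by
        rw [hg_apply]
        refine Finset.sum_eq_zero fun i _ => ?_
        rw [chi_apply_not_mem (hd_clopen i) (fun hxi => hx (hd_sub_a i hxi)), mul_zero]
      rw [hgx, chi_apply_not_mem ha hx, mul_zero, sub_zero, norm_zero]
      exact hη.le
  have hgval : ε' / 2 ≤ ζ g := by
    have h1 : |ζ (h * chi a) - ζ g| ≤ ‖ζ‖ * η := by
      rw [← map_sub]
      calc |ζ (h * chi a - g)| ≤ ‖ζ‖ * ‖h * chi a - g‖ := ζ.le_opNorm _
      _ ≤ ‖ζ‖ * η := mul_le_mul_of_nonneg_left happrox (norm_nonneg ζ)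
    have h2 : ‖ζ‖ * η ≤ ε' / 2 := by
      rw [hη_def, mul_div_assoc']
      rw [div_le_div_iff₀ (by positivity) (by norm_num : (0:ℝ) < 2)]
      nlinarith [norm_nonneg ζ, hε'.le]
    have := abs_le.mp h1
    linarith
  have hζg : ζ g = ∑ i ∈ Finset.range n, β i * ζ (chi (d i)) := by
    rw [hg_def, map_sum]
    exact Finset.sum_congr rfl fun i _ => by rw [map_smul, smul_eq_mul]
  set ν : ℕ → ℝ := fun i => ζ (chi (d i)) with hν_def
  set P : Finset ℕ := (Finset.range n).filter (fun i => 0 ≤ ν i) with hP_def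
  set Q : Finset ℕ := (Finset.range n).filter (fun i => ¬ 0 ≤ ν i) with hQ_def
  have hβle : ∀ i, |β i| ≤ C₀ := by
    intro i
    rw [hβ_def]
    by_cases hi : i < n
    · simp only [dif_pos hi]
      calc |h _| ≤ ‖h‖ := by
            rw [← Real.norm_eq_abs]
            exact h.norm_coe_le_norm _
      _ ≤ C₀ := hh
    · simp only [dif_neg hi, abs_zero]
      exact hC₀.le
  have hsplit : ζ g = (∑ i ∈ P, β i * ν i) + ∑ i ∈ Q, β i * ν i := by
    rw [hζg, hP_def, hQ_def]
    exact (Finset.sum_filter_add_sum_filter_not _ _ _).symm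
  have hPbound : ∑ i ∈ P, β i * ν i ≤ C₀ * ∑ i ∈ P, ν i := by
    rw [Finset.mul_sum]
    refine Finset.sum_le_sum fun i hi => ?_
    have hν0 : 0 ≤ ν i := (Finset.mem_filter.mp hi).2
    have : β i ≤ C₀ := le_trans (le_abs_self _) (hβle i)
    exact mul_le_mul_of_nonneg_right this hν0
  have hQbound : ∑ i ∈ Q, β i * ν i ≤ C₀ * ∑ i ∈ Q, -ν i := by
    rw [Finset.mul_sum]
    refine Finset.sum_le_sum fun i hi => ?_
    have hν0 : ν i < 0 := lt_of_not_ge (Finset.mem_filter.mp hi).2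
    calc β i * ν i ≤ |β i * ν i| := le_abs_self _
    _ = |β i| * |ν i| := abs_mul _ _
    _ ≤ C₀ * |ν i| := mul_le_mul_of_nonneg_right (hβle i) (abs_nonneg _)
    _ = C₀ * -ν i := by rw [abs_of_neg hν0]
  set cP : Set K := ⋃ i ∈ P, d i with hcP_def
  set cQ : Set K := ⋃ i ∈ Q, d i with hcQ_def
  have hcP_clopen : IsClopen cP := isClopen_biUnion_finset (fun i _ => hd_clopen i)
  have hcQ_clopen : IsClopen cQ := isClopen_biUnion_finset (fun i _ => hd_clopen i)
  have hcP_sub : cP ⊆ a := Set.iUnion₂_subset fun i _ => hd_sub_a i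
  have hcQ_sub : cQ ⊆ a := Set.iUnion₂_subset fun i _ => hd_sub_a i
  have hνP : ζ (chi cP) = ∑ i ∈ P, ν i := by
    rw [hcP_def, chi_finset_sum P d (fun i _ => hd_clopen i)
      (fun i _ j _ hij => hd_disj i j hij), map_sum]
  have hνQ : ζ (chi cQ) = ∑ i ∈ Q, ν i := by
    rw [hcQ_def, chi_finset_sum Q d (fun i _ => hd_clopen i)
      (fun i _ j _ hij => hd_disj i j hij), map_sum]
  have hmain : ε' / 2 ≤ C₀ * (|ζ (chi cP)| + |ζ (chi cQ)|) := by
    have h1 : ∑ i ∈ P, ν i ≤ |ζ (chi cP)| := by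
      rw [← hνP]; exact le_abs_self _
    have h2 : ∑ i ∈ Q, -ν i ≤ |ζ (chi cQ)| := by
      have : ∑ i ∈ Q, -ν i = -(∑ i ∈ Q, ν i) := by rw [Finset.sum_neg_distrib]
      rw [this, ← hνQ]
      exact neg_le_abs _
    calc ε' / 2 ≤ ζ g := hgval
    _ = (∑ i ∈ P, β i * ν i) + ∑ i ∈ Q, β i * ν i := hsplit
    _ ≤ C₀ * ∑ i ∈ P, ν i + C₀ * ∑ i ∈ Q, -ν i := add_le_add hPbound hQbound
    _ ≤ C₀ * |ζ (chi cP)| + C₀ * |ζ (chi cQ)| :=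
        add_le_add (mul_le_mul_of_nonneg_left h1 hC₀.le) (mul_le_mul_of_nonneg_left h2 hC₀.le)
    _ = C₀ * (|ζ (chi cP)| + |ζ (chi cQ)|) := by ring
  by_cases hPQ : |ζ (chi cQ)| ≤ |ζ (chi cP)|
  · refine ⟨cP, hcP_clopen, hcP_sub, ?_⟩
    rw [div_le_iff₀ (by positivity)]
    nlinarith
  · refine ⟨cQ, hcQ_clopen, hcQ_sub, ?_⟩
    rw [div_le_iff₀ (by positivity)]
    nlinarith [le_of_not_ge hPQ]

end Mass
section Functional

variable {E : Type*} [NormedAddCommGroup E] [NormedSpace ℝ E]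

lemma norm_quot_mk_eq_infDist (Z : Submodule ℝ E) (w : E) :
    ‖(Submodule.Quotient.mk w : E ⧸ Z)‖ = Metric.infDist w (Z : Set E) := by
  have hne : (Z : Set E).Nonempty := ⟨0, Z.zero_mem⟩
  refine le_antisymm ?_ ?_
  · by_contra hlt
    obtain ⟨z, hz, hdz⟩ := (Metric.infDist_lt_iff hne).mp (lt_of_not_ge hlt)
    refine absurd hdz (not_lt.mpr ?_)
    have h1 : (Submodule.Quotient.mk (w - z) : E ⧸ Z) = Submodule.Quotient.mk w := by
      rw [Submodule.Quotient.eq]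
      simpa using Z.neg_mem hz
    calc ‖(Submodule.Quotient.mk w : E ⧸ Z)‖
        = ‖(Submodule.Quotient.mk (w - z) : E ⧸ Z)‖ := by rw [h1]
      _ ≤ ‖w - z‖ := Submodule.Quotient.norm_mk_le Z (w - z)
      _ = dist w z := (dist_eq_norm w z).symm
    
  · refine le_of_forall_pos_le_add fun ε hε => ?_
    obtain ⟨m, hm, hmn⟩ := Submodule.Quotient.norm_mk_lt (Submodule.Quotient.mk w : E ⧸ Z) hε
    have hz : w - m ∈ Z := by
      have := (Submodule.Quotient.eq Z).mp hm
      simpa using Z.neg_mem this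
    calc Metric.infDist w (Z : Set E) ≤ dist w (w - m) := Metric.infDist_le_dist_of_mem hz
    _ = ‖m‖ := by rw [dist_eq_norm]; simp
    _ ≤ ‖(Submodule.Quotient.mk w : E ⧸ Z)‖ + ε := hmn.le

lemma exists_perp_functional (Z : Submodule ℝ E) (hZ : IsClosed (Z : Set E)) (w : E)
    (hw : 0 < Metric.infDist w (Z : Set E)) :
    ∃ ξ : E →L[ℝ] ℝ, (∀ h : E, |ξ h| ≤ Metric.infDist h (Z : Set E)) ∧
      ξ w = Metric.infDist w (Z : Set E) := by
  haveI : IsClosed (Z : Set E) := hZ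
  set mkCLM : E →L[ℝ] E ⧸ Z := LinearMap.mkContinuous Z.mkQ 1 (fun x => by
    rw [one_mul, Submodule.mkQ_apply]
    exact Submodule.Quotient.norm_mk_le Z x) with hmk_def
  have hmk_apply : ∀ x : E, mkCLM x = Submodule.Quotient.mk x := fun x => rfl
  have hne : (Submodule.Quotient.mk w : E ⧸ Z) ≠ 0 := by
    intro h0
    rw [← hmk_apply] at h0
    have : ‖(Submodule.Quotient.mk w : E ⧸ Z)‖ = 0 := by
      rw [← hmk_apply, h0, norm_zero]
    rw [norm_quot_mk_eq_infDist] at this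
    linarith
  obtain ⟨g, hg1, hgw⟩ := exists_dual_vector ℝ (Submodule.Quotient.mk w : E ⧸ Z) (norm_ne_zero_iff.mpr hne)
  refine ⟨g.comp mkCLM, fun h => ?_, ?_⟩
  · calc |(g.comp mkCLM) h| = ‖g (mkCLM h)‖ := (Real.norm_eq_abs _).symm
    _ ≤ ‖g‖ * ‖mkCLM h‖ := g.le_opNorm _
    _ = ‖mkCLM h‖ := by rw [hg1, one_mul]
    _ = Metric.infDist h (Z : Set E) := by rw [hmk_apply, norm_quot_mk_eq_infDist]
  · calc (g.comp mkCLM) w = g (Submodule.Quotient.mk w) := by rw [ContinuousLinearMap.comp_apply, hmk_apply]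
    _ = ‖(Submodule.Quotient.mk w : E ⧸ Z)‖ := hgw
    _ = Metric.infDist w (Z : Set E) := norm_quot_mk_eq_infDist Z w

end Functional
section Machine

attribute [local instance] Classical.propDecidable

variable {K : Type*} [TopologicalSpace K] [CompactSpace K]

/-- Configuration for the Rosenthal-type exhaustion argument: an infinite set `L` of live
indices, disjoint clopen atoms `c j` carrying functional-value `> δ`, and for each live `j`
a family of `t` pairwise disjoint clopen "reserved chunks", each of variation-mass `≥ δ/2`
and disjoint from all live atoms. -/
structure Cfg (ζ : ℕ → (C(K, ℝ) →L[ℝ] ℝ)) (c : ℕ → Set K) (δ : ℝ) (t : ℕ) where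
  L : Set ℕ
  d : ℕ → ℕ → Set K
  hL : L.Infinite
  hc : ∀ j ∈ L, IsClopen (c j)
  hcd : ∀ j ∈ L, ∀ k ∈ L, j ≠ k → Disjoint (c j) (c k)
  hval : ∀ j ∈ L, δ < |ζ j (chi (c j))|
  hd : ∀ j ∈ L, ∀ s < t, IsClopen (d j s)
  hdm : ∀ j ∈ L, ∀ s < t, δ / 2 ≤ vv (ζ j) (d j s)
  hdd : ∀ j ∈ L, ∀ s < t, ∀ s' < t, s ≠ s' → Disjoint (d j s) (d j s')
  hdc : ∀ j ∈ L, ∀ s < t, ∀ k ∈ L, Disjoint (d j s) (c k)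

lemma cfg_mass {ζ : ℕ → (C(K, ℝ) →L[ℝ] ℝ)} {c : ℕ → Set K} {δ : ℝ} {t : ℕ}
    (cfg : Cfg ζ c δ t) {R₀ : ℝ} (hnorm : ∀ j, ‖ζ j‖ ≤ R₀) :
    (t : ℝ) * (δ / 2) ≤ R₀ := by
  obtain ⟨j, hj⟩ := cfg.hL.nonempty
  have h1 : ∑ s ∈ Finset.range t, (δ / 2) ≤ ∑ s ∈ Finset.range t, vv (ζ j) (cfg.d j s) :=
    Finset.sum_le_sum fun s hs => cfg.hdm j hj s (Finset.mem_range.mp hs)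
  have h2 : ∑ s ∈ Finset.range t, vv (ζ j) (cfg.d j s) ≤ ‖ζ j‖ :=
    vv_sum_le (ζ j) (cfg.d j) t (fun s hs s' hs' hss' => cfg.hdd j hj s hs s' hs' hss')
  have h3 : ∑ s ∈ Finset.range t, (δ / 2) = (t : ℝ) * (δ / 2) := by
    rw [Finset.sum_const, Finset.card_range, nsmul_eq_mul]
  linarith [hnorm j]

variable {ζ : ℕ → (C(K, ℝ) →L[ℝ] ℝ)} {δ : ℝ}

noncomputable def cfg_step
    (hsup : ∀ a : ℕ → Set K, (∀ n, IsClopen (a n)) →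
      (∀ m n, m ≠ n → Disjoint (a m) (a n)) →
      ∃ M : Set ℕ, M.Infinite ∧ ∃ s : Set K, IsClopen s ∧ (∀ n ∈ M, a n ⊆ s) ∧
        ∀ t : Set K, IsClopen t → (∀ n ∈ M, a n ⊆ t) → s ⊆ t)
    (hnull : ∀ g : C(K, ℝ), Filter.Tendsto (fun j => ζ j g) Filter.atTop (nhds 0))
    (hδ : 0 < δ)
    {c : ℕ → Set K} {t : ℕ} (cfg : Cfg ζ c δ t) : Cfg ζ c δ (t + 1) := by
  classical
  -- enumerate the live set and split it into countably many disjoint infinite blocks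
  set φ : ℕ → ℕ := fun i => ((Set.Infinite.natEmbedding _ cfg.hL i : ↥cfg.L) : ℕ) with hφ_def
  have hφ_inj : Function.Injective φ := fun i i' h =>
    (Set.Infinite.natEmbedding _ cfg.hL).injective (Subtype.ext h)
  have hφ_mem : ∀ i, φ i ∈ cfg.L := fun i => (Set.Infinite.natEmbedding _ cfg.hL i).2
  set jdx : ℕ → ℕ → ℕ := fun r i => φ (Nat.pair r i) with hjdx_def
  have hjdx_mem : ∀ r i, jdx r i ∈ cfg.L := fun r i => hφ_mem _
  have hjdx_inj : ∀ r i r' i', jdx r i = jdx r' i' → r = r' ∧ i = i' := by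
    intro r i r' i' h
    exact Nat.pair_eq_pair.mp (hφ_inj h)
  -- apply `hsup` to each block
  have hex : ∀ r : ℕ, ∃ M : Set ℕ, ∃ S : Set K, M.Infinite ∧ IsClopen S ∧
      (∀ i ∈ M, c (jdx r i) ⊆ S) ∧
      (∀ t', IsClopen t' → (∀ i ∈ M, c (jdx r i) ⊆ t') → S ⊆ t') := by
    intro r
    obtain ⟨M, hM, S, hS1, hS2, hS3⟩ := hsup (fun i => c (jdx r i))
      (fun i => cfg.hc _ (hjdx_mem r i))
      (fun i i' hii' => cfg.hcd _ (hjdx_mem r i) _ (hjdx_mem r i')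
        (fun h => hii' (hjdx_inj r i r i' h).2))
    exact ⟨M, S, hM, hS1, hS2, hS3⟩
  choose M S hM hSclopen hSbound hSleast using hex
  -- a clopen set disjoint from all the atoms of block `r` is disjoint from its supremum
  have havoid : ∀ r (e : Set K), IsClopen e → (∀ i ∈ M r, Disjoint e (c (jdx r i))) →
      Disjoint e (S r) := by
    intro r e he hdis
    have h1 : S r ⊆ S r \ e := by
      refine hSleast r (S r \ e) ((hSclopen r).diff he) (fun i hi => ?_)
      exact Set.subset_diff.mpr ⟨hSbound r i hi, (hdis i hi).symm⟩
    exact Set.disjoint_right.mpr fun x hxS hxe => (h1 hxS).2 hxe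
  set Bad : ℕ → Set ℕ :=
    fun r => {i | i ∈ M r ∧ vv (ζ (jdx r i)) (S r \ c (jdx r i)) < δ / 2} with hBad_def
  by_cases hcase : ∃ r, (Bad r).Infinite
  · -- Case A: contradiction with weak*-nullity
    exfalso
    obtain ⟨r, hr⟩ := hcase
    set ψ : ℕ → ℕ := fun i => ((Set.Infinite.natEmbedding _ hr i : ↥(Bad r)) : ℕ) with hψ_def
    have hψ_inj : Function.Injective ψ := fun i i' h =>
      (Set.Infinite.natEmbedding _ hr).injective (Subtype.ext h)
    have hψ_mem : ∀ i, ψ i ∈ Bad r := fun i => (Set.Infinite.natEmbedding _ hr i).2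
    obtain ⟨M', S', hM', hS'clopen, hS'bound, hS'least⟩ : ∃ M' : Set ℕ, ∃ S' : Set K,
        M'.Infinite ∧ IsClopen S' ∧ (∀ i ∈ M', c (jdx r (ψ i)) ⊆ S') ∧
        (∀ t', IsClopen t' → (∀ i ∈ M', c (jdx r (ψ i)) ⊆ t') → S' ⊆ t') := by
      obtain ⟨M', hM', S', hS1, hS2, hS3⟩ := hsup (fun i => c (jdx r (ψ i)))
        (fun i => cfg.hc _ (hjdx_mem r (ψ i)))
        (fun i i' hii' => cfg.hcd _ (hjdx_mem r (ψ i)) _ (hjdx_mem r (ψ i'))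
          (fun h => hii' (hψ_inj (hjdx_inj r (ψ i) r (ψ i') h).2)))
      exact ⟨M', S', hM', hS1, hS2, hS3⟩
    have hsub : S' ⊆ S r :=
      hS'least (S r) (hSclopen r) (fun i _ => hSbound r (ψ i) (hψ_mem i).1)
    set g : C(K, ℝ) := chi S' with hg_def
    have hbig : ∀ i ∈ M', δ / 2 < |ζ (jdx r (ψ i)) g| := by
      intro i hi
      set j : ℕ := jdx r (ψ i) with hj_def
      have hjL : j ∈ cfg.L := hjdx_mem r (ψ i)
      have hcj_sub : c j ⊆ S' := hS'bound i hi
      have hchi : g = chi (c j) + chi (S' \ c j) :=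
        chi_diff (cfg.hc j hjL) hS'clopen hcj_sub
      have hrest : |ζ j (chi (S' \ c j))| < δ / 2 := by
        calc |ζ j (chi (S' \ c j))| ≤ vv (ζ j) (S' \ c j) :=
              abs_apply_chi_le_vv (ζ j) (hS'clopen.diff (cfg.hc j hjL))
        _ ≤ vv (ζ j) (S r \ c j) := vv_mono _ (Set.diff_subset_diff_left hsub)
        _ < δ / 2 := (hψ_mem i).2
      have hcjval : δ < |ζ j (chi (c j))| := cfg.hval j hjL
      have : ζ j g = ζ j (chi (c j)) + ζ j (chi (S' \ c j)) := by
        rw [hchi, map_add]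
      have habs := abs_add_le (ζ j g) (-(ζ j (chi (S' \ c j))))
      rw [this] at habs ⊢
      have h1 : |ζ j (chi (c j))| ≤ |ζ j (chi (c j)) + ζ j (chi (S' \ c j))| +
          |ζ j (chi (S' \ c j))| := by
        have := abs_add_le (ζ j (chi (c j)) + ζ j (chi (S' \ c j))) (-(ζ j (chi (S' \ c j))))
        simpa using this
      linarith
    obtain ⟨N, hN⟩ := Metric.tendsto_atTop.mp (hnull g) (δ / 2) (by linarith)
    have hJinf : ((fun i => jdx r (ψ i)) '' M').Infinite := by
      refine hM'.image ?_
      intro i _ i' _ h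
      exact hψ_inj (hjdx_inj _ _ _ _ h).2
    obtain ⟨j, hjmem, hjN⟩ := hJinf.exists_gt N
    obtain ⟨i, hi, rfl⟩ := hjmem
    have h1 := hN _ (le_of_lt hjN)
    rw [Real.dist_eq, sub_zero] at h1
    exact absurd h1 (not_lt.mpr (hbig i hi).le)
  · -- Case B: extend every surviving functional by one more chunk
    push_neg at hcase
    have hBadFin : ∀ r, (Bad r).Finite := fun r => hcase r
    have hGood : ∀ r, (M r \ Bad r).Infinite := fun r => (hM r).diff (hBadFin r)
    set ig : ℕ → ℕ := fun r => (hGood r).nonempty.choose with hig_def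
    have hig_mem : ∀ r, ig r ∈ M r \ Bad r := fun r => (hGood r).nonempty.choose_spec
    set jr : ℕ → ℕ := fun r => jdx r (ig r) with hjr_def
    have hjr_inj : Function.Injective jr := by
      intro r r' h
      exact (hjdx_inj _ _ _ _ h).1
    have hjr_mem : ∀ r, jr r ∈ cfg.L := fun r => hjdx_mem r (ig r)
    set ρ : ℕ → ℕ := fun j => if hex : ∃ r, jr r = j then hex.choose else 0 with hρ_def
    have hρ_spec : ∀ r, ρ (jr r) = r := by
      intro r
      have hex : ∃ r', jr r' = jr r := ⟨r, rfl⟩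
      have := hex.choose_spec
      simp only [hρ_def, dif_pos hex]
      exact hjr_inj this
    set L' : Set ℕ := Set.range jr with hL'_def
    have hL'sub : L' ⊆ cfg.L := by
      rintro j ⟨r, rfl⟩
      exact hjr_mem r
    set d' : ℕ → ℕ → Set K := fun j s => if s = t then S (ρ j) \ c j else cfg.d j s with hd'_def
    refine ⟨L', d', Set.infinite_range_of_injective hjr_inj,
      fun j hj => cfg.hc j (hL'sub hj),
      fun j hj k hk hjk => cfg.hcd j (hL'sub hj) k (hL'sub hk) hjk,
      fun j hj => cfg.hval j (hL'sub hj), ?_, ?_, ?_, ?_⟩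
    · -- clopen chunks
      intro j hj s hs
      rcases Nat.lt_succ_iff_lt_or_eq.mp hs with hst | rfl
      · simp only [hd'_def, if_neg (Nat.ne_of_lt hst)]
        exact cfg.hd j (hL'sub hj) s hst
      · simp only [hd'_def, if_pos rfl]
        exact (hSclopen (ρ j)).diff (cfg.hc j (hL'sub hj))
    · -- mass of chunks
      intro j hj s hs
      rcases Nat.lt_succ_iff_lt_or_eq.mp hs with hst | rfl
      · simp only [hd'_def, if_neg (Nat.ne_of_lt hst)]
        exact cfg.hdm j (hL'sub hj) s hst
      · simp only [hd'_def, if_pos rfl]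
        obtain ⟨r, rfl⟩ := hj
        rw [hρ_spec r]
        have hig2 := hig_mem r
        have : ¬ vv (ζ (jdx r (ig r))) (S r \ c (jdx r (ig r))) < δ / 2 := by
          intro hlt
          exact hig2.2 ⟨hig2.1, hlt⟩
        exact le_of_not_gt this
    · -- chunks pairwise disjoint
      intro j hj s hs s' hs' hss'
      have key : ∀ u < t, Disjoint (d' j u) (d' j t) := by
        intro u hu
        simp only [hd'_def, if_neg (Nat.ne_of_lt hu), if_pos rfl]
        obtain ⟨r, rfl⟩ := hj
        rw [hρ_spec r]
        have hdisS : Disjoint (cfg.d (jr r) u) (S r) := by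
          refine havoid r _ (cfg.hd _ (hjr_mem r) u hu) (fun i hi => ?_)
          exact cfg.hdc _ (hjr_mem r) u hu _ (hjdx_mem r i)
        exact hdisS.mono_right Set.diff_subset
      rcases Nat.lt_succ_iff_lt_or_eq.mp hs with hst | rfl
      · rcases Nat.lt_succ_iff_lt_or_eq.mp hs' with hst' | rfl
        · simp only [hd'_def, if_neg (Nat.ne_of_lt hst), if_neg (Nat.ne_of_lt hst')]
          exact cfg.hdd j (hL'sub hj) s hst s' hst' hss'
        · exact key s hst
      · rcases Nat.lt_succ_iff_lt_or_eq.mp hs' with hst' | rfl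
        · exact (key s' hst').symm
        · exact absurd rfl hss'
    · -- chunks disjoint from live atoms
      intro j hj s hs k hk
      rcases Nat.lt_succ_iff_lt_or_eq.mp hs with hst | rfl
      · simp only [hd'_def, if_neg (Nat.ne_of_lt hst)]
        exact cfg.hdc j (hL'sub hj) s hst k (hL'sub hk)
      · simp only [hd'_def, if_pos rfl]
        obtain ⟨r, rfl⟩ := hj
        rw [hρ_spec r]
        by_cases hkj : k = jr r
        · subst hkj
          exact Set.disjoint_left.mpr fun x hx => fun hxc => hx.2 hxc
        · obtain ⟨r', rfl⟩ := hk
          have hrr' : r' ≠ r := fun h => hkj (by rw [h])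
          have hdisS : Disjoint (c (jr r')) (S r) := by
            refine havoid r _ (cfg.hc _ (hjr_mem r')) (fun i hi => ?_)
            refine cfg.hcd _ (hjr_mem r') _ (hjdx_mem r i) (fun h => ?_)
            exact hrr' (hjdx_inj _ _ _ _ h).1
          exact (hdisS.symm.mono_left Set.diff_subset)

lemma machine_false
    (hsup : ∀ a : ℕ → Set K, (∀ n, IsClopen (a n)) →
      (∀ m n, m ≠ n → Disjoint (a m) (a n)) →
      ∃ M : Set ℕ, M.Infinite ∧ ∃ s : Set K, IsClopen s ∧ (∀ n ∈ M, a n ⊆ s) ∧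
        ∀ t : Set K, IsClopen t → (∀ n ∈ M, a n ⊆ t) → s ⊆ t)
    (hnull : ∀ g : C(K, ℝ), Filter.Tendsto (fun j => ζ j g) Filter.atTop (nhds 0))
    (hδ : 0 < δ)
    {c : ℕ → Set K} {R₀ : ℝ}
    (hnorm : ∀ j, ‖ζ j‖ ≤ R₀)
    (hc : ∀ j, IsClopen (c j)) (hcd : ∀ j k, j ≠ k → Disjoint (c j) (c k))
    (hval : ∀ j, δ < |ζ j (chi (c j))|) : False := by
  have base : Cfg ζ c δ 0 :=
    ⟨Set.univ, fun _ _ => ∅, Set.infinite_univ,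
      fun j _ => hc j, fun j _ k _ hjk => hcd j k hjk, fun j _ => hval j,
      fun j _ s hs => absurd hs (Nat.not_lt_zero s),
      fun j _ s hs => absurd hs (Nat.not_lt_zero s),
      fun j _ s hs => absurd hs (Nat.not_lt_zero s),
      fun j _ s hs => absurd hs (Nat.not_lt_zero s)⟩
  have all : ∀ t : ℕ, Nonempty (Cfg ζ c δ t) := by
    intro t
    induction t with
    | zero => exact ⟨base⟩
    | succ t ih => exact ih.elim fun cfg => ⟨cfg_step hsup hnull hδ cfg⟩
  obtain ⟨t, ht⟩ := exists_nat_gt (2 * R₀ / δ)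
  obtain ⟨cfg⟩ := all t
  have h1 := cfg_mass cfg hnorm
  have h2 : 2 * R₀ < t * δ := by
    rwa [div_lt_iff₀ hδ] at ht
  linarith

end Machine
section EvalX

/-- Evaluation of the `n`-th coordinate as a continuous linear map on `X₊`. -/
noncomputable def evalX (K : Type*) [TopologicalSpace K] [CompactSpace K]
    (Cal : Set (Set K)) (n : ℕ) : ↥(Xplus K Cal) →L[ℝ] C(K, ℝ) :=
  LinearMap.mkContinuous
    { toFun := fun x => (x : lp (fun _ : ℕ => C(K, ℝ)) ⊤) n
      map_add' := fun x y => by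
        have h : ((x + y : ↥(Xplus K Cal)) : lp (fun _ : ℕ => C(K, ℝ)) ⊤)
            = (x : lp (fun _ : ℕ => C(K, ℝ)) ⊤) + (y : lp (fun _ : ℕ => C(K, ℝ)) ⊤) := rfl
        show ((x + y : ↥(Xplus K Cal)) : lp (fun _ : ℕ => C(K, ℝ)) ⊤) n
            = (x : lp (fun _ : ℕ => C(K, ℝ)) ⊤) n + (y : lp (fun _ : ℕ => C(K, ℝ)) ⊤) n
        rw [h, lp.coeFn_add, Pi.add_apply]
      map_smul' := fun r x => by
        have h : ((r • x : ↥(Xplus K Cal)) : lp (fun _ : ℕ => C(K, ℝ)) ⊤)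
            = r • (x : lp (fun _ : ℕ => C(K, ℝ)) ⊤) := rfl
        show ((r • x : ↥(Xplus K Cal)) : lp (fun _ : ℕ => C(K, ℝ)) ⊤) n
            = (RingHom.id ℝ) r • (x : lp (fun _ : ℕ => C(K, ℝ)) ⊤) n
        rw [h, lp.coeFn_smul, Pi.smul_apply]
        rfl }
    1 (fun x => by
      rw [one_mul]
      exact lp.norm_apply_le_norm ENNReal.top_ne_zero (x : lp (fun _ : ℕ => C(K, ℝ)) ⊤) n)

lemma evalX_apply (K : Type*) [TopologicalSpace K] [CompactSpace K]
    (Cal : Set (Set K)) (n : ℕ) (x : ↥(Xplus K Cal)) :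
    evalX K Cal n x = (x : lp (fun _ : ℕ => C(K, ℝ)) ⊤) n := rfl

end EvalX
/-- Uniformity lemma: for `T : C(K) → X₊` and a bounded pairwise disjoint sequence `(f_m)`,
the distances `dist (Pₙ (T f_m), Z)` are uniformly small for large `n`. -/
theorem uniform_smallness_of_distances
    (K : Type*) [TopologicalSpace K] [CompactSpace K] [T2Space K]
    [TotallyDisconnectedSpace K] [TopologicalSpace.SeparableSpace K]
    (hperf : Perfect (Set.univ : Set K))
    (K₁ K₂ : Set K) (hK₁ : IsClopen K₁) (hK₂ : IsClopen K₂)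
    (hdisjK : Disjoint K₁ K₂) (hcover : K₁ ∪ K₂ = Set.univ)
    (hops : ∀ T : C(K, ℝ) →L[ℝ] C(K, ℝ), ∃ g : C(K, ℝ), ∃ S : C(K, ℝ) →L[ℝ] C(K, ℝ),
      IsWeaklyCompactOp S ∧ ∀ f : C(K, ℝ), T f = g * f + S f)
    (hnolinf : ¬ ∃ (T : lp (fun _ : ℕ => ℝ) ⊤ →L[ℝ] C(K, ℝ)) (c : ℝ), 0 < c ∧
      ∀ f : lp (fun _ : ℕ => ℝ) ⊤, c * ‖f‖ ≤ ‖T f‖)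
    (B : Set (Set K)) (hBclopen : ∀ b ∈ B, IsClopen b)
    (hBempty : (∅ : Set K) ∈ B) (hBuniv : (Set.univ : Set K) ∈ B)
    (hBunion : ∀ b ∈ B, ∀ c ∈ B, b ∪ c ∈ B) (hBcompl : ∀ b ∈ B, bᶜ ∈ B)
    (hK₁B : K₁ ∈ B) (hK₂B : K₂ ∈ B)
    (hBdense : ∀ a : Set K, IsClopen a → a.Nonempty → ∃ b ∈ B, b.Nonempty ∧ b ⊆ a)
    (j : Set K → Set K) (hjB : ∀ b ∈ B, j b ∈ B)
    (hjunion : ∀ b ∈ B, ∀ c ∈ B, j (b ∪ c) = j b ∪ j c)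
    (hjcompl : ∀ b ∈ B, j bᶜ = (j b)ᶜ)
    (hjinv : ∀ b ∈ B, j (j b) = b)
    (hjK₁ : j K₁ = K₂)
    (hsup : ∀ a : ℕ → Set K, (∀ n, IsClopen (a n)) →
      (∀ m n, m ≠ n → Disjoint (a m) (a n)) →
      ∃ M : Set ℕ, M.Infinite ∧ ∃ s : Set K, IsClopen s ∧ (∀ n ∈ M, a n ⊆ s) ∧
        ∀ t : Set K, IsClopen t → (∀ n ∈ M, a n ⊆ t) → s ⊆ t)
    (T : C(K, ℝ) →L[ℝ] ↥(Xplus K {b ∈ B | j b = b}))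
    (f : ℕ → C(K, ℝ)) (hbdd : ∃ C : ℝ, ∀ m, ‖f m‖ ≤ C)
    (hdisj : ∀ m m', m ≠ m' → f m * f m' = 0) :
    ∀ ε : ℝ, 0 < ε → ∃ k : ℕ, ∀ n > k, ∀ m : ℕ,
      Metric.infDist ((T (f m) : lp (fun _ : ℕ => C(K, ℝ)) ⊤) n)
        ((Zspan K {b ∈ B | j b = b} : Submodule ℝ C(K, ℝ)) : Set C(K, ℝ)) ≤ ε := by
  classical
  intro ε hε
  by_contra hcon
  push_neg at hcon
  set Z : Submodule ℝ C(K, ℝ) := Zspan K {b ∈ B | j b = b} with hZ_def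
  have hZclosed : IsClosed (Z : Set C(K, ℝ)) := Submodule.isClosed_topologicalClosure _
  have htend : ∀ g : C(K, ℝ), Filter.Tendsto
      (fun n => Metric.infDist ((T g : lp (fun _ : ℕ => C(K, ℝ)) ⊤) n) (Z : Set C(K, ℝ)))
      Filter.atTop (nhds 0) := fun g => (T g).2
  obtain ⟨C, hC⟩ := hbdd
  set C₀ : ℝ := max C 1 with hC₀_def
  have hC₀pos : (0 : ℝ) < C₀ := lt_of_lt_of_le one_pos (le_max_right _ _)
  have hfC₀ : ∀ m, ‖f m‖ ≤ C₀ := fun m => le_trans (hC m) (le_max_left _ _)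
  set R₀ : ℝ := ‖T‖ with hR₀_def
  have hR₀ : 0 ≤ R₀ := norm_nonneg T
  have hth : ∀ m : ℕ, ∃ N : ℕ, ∀ n ≥ N,
      Metric.infDist ((T (f m) : lp (fun _ : ℕ => C(K, ℝ)) ⊤) n) (Z : Set C(K, ℝ)) < ε := by
    intro m
    obtain ⟨N, hN⟩ := Metric.tendsto_atTop.mp (htend (f m)) ε hε
    refine ⟨N, fun n hn => ?_⟩
    have := hN n hn
    rwa [Real.dist_eq, sub_zero, abs_of_nonneg Metric.infDist_nonneg] at this
  choose Nm hNm using hth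
  choose nn hnn mm hmm using hcon
  set σ : ℕ → ℕ := fun jj => Nat.rec 0 (fun _ prev => max (nn prev) (Nm (mm prev))) jj
    with hσ_def
  have hσ_succ : ∀ jj, σ (jj + 1) = max (nn (σ jj)) (Nm (mm (σ jj))) := fun jj => rfl
  set ns : ℕ → ℕ := fun jj => nn (σ jj) with hns_def
  set ms : ℕ → ℕ := fun jj => mm (σ jj) with hms_def
  have hgt : ∀ jj, σ jj < ns jj := fun jj => hnn (σ jj)
  have hval0 : ∀ jj, ε < Metric.infDist
      ((T (f (ms jj)) : lp (fun _ : ℕ => C(K, ℝ)) ⊤) (ns jj)) (Z : Set C(K, ℝ)) :=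
    fun jj => hmm (σ jj)
  have hσmono : StrictMono σ := by
    refine strictMono_nat_of_lt_succ fun jj => ?_
    calc σ jj < ns jj := hgt jj
    _ ≤ max (nn (σ jj)) (Nm (mm (σ jj))) := le_max_left _ _
    _ = σ (jj + 1) := (hσ_succ jj).symm
  have hnsmono : StrictMono ns := by
    refine strictMono_nat_of_lt_succ fun jj => ?_
    calc ns jj ≤ σ (jj + 1) := by rw [hσ_succ]; exact le_max_left _ _
    _ < nn (σ (jj + 1)) := hnn _
  have hns_tend : Filter.Tendsto ns Filter.atTop Filter.atTop := hnsmono.tendsto_atTop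
  have hms_ne : ∀ s jj, s < jj → ms jj ≠ ms s := by
    intro s jj hsj heq
    have h1 : Nm (ms s) ≤ σ (s + 1) := by rw [hσ_succ]; exact le_max_right _ _
    have h2 : σ (s + 1) ≤ σ jj := hσmono.monotone (Nat.succ_le_of_lt hsj)
    have h3 : Nm (ms s) ≤ ns jj := le_trans (le_trans h1 h2) (le_of_lt (hgt jj))
    have h4 := hNm (ms s) (ns jj) h3
    have h5 := hval0 jj
    rw [heq] at h5
    linarith
  have hms_inj : Function.Injective ms := by
    intro a b hab
    by_contra hne
    rcases lt_or_gt_of_ne hne with h | h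
    · exact hms_ne a b h hab.symm
    · exact hms_ne b a h hab
  -- the functionals
  have hfun : ∀ jj : ℕ, ∃ ξ : C(K, ℝ) →L[ℝ] ℝ,
      (∀ h : C(K, ℝ), |ξ h| ≤ Metric.infDist h (Z : Set C(K, ℝ))) ∧
      ξ ((T (f (ms jj)) : lp (fun _ : ℕ => C(K, ℝ)) ⊤) (ns jj)) =
        Metric.infDist ((T (f (ms jj)) : lp (fun _ : ℕ => C(K, ℝ)) ⊤) (ns jj))
          (Z : Set C(K, ℝ)) :=
    fun jj => exists_perp_functional Z hZclosed _ (lt_trans hε (hval0 jj))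
  choose ξ hξ1 hξ2 using hfun
  set ζ : ℕ → (C(K, ℝ) →L[ℝ] ℝ) :=
    fun jj => (ξ jj).comp ((evalX K {b ∈ B | j b = b} (ns jj)).comp T) with hζ_def
  have hζ_apply : ∀ jj g, ζ jj g = ξ jj ((T g : lp (fun _ : ℕ => C(K, ℝ)) ⊤) (ns jj)) :=
    fun jj g => rfl
  have hζnorm : ∀ jj, ‖ζ jj‖ ≤ R₀ := by
    intro jj
    refine ContinuousLinearMap.opNorm_le_bound _ hR₀ fun g => ?_
    rw [hζ_apply, Real.norm_eq_abs]
    calc |ξ jj ((T g : lp (fun _ : ℕ => C(K, ℝ)) ⊤) (ns jj))|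
        ≤ Metric.infDist ((T g : lp (fun _ : ℕ => C(K, ℝ)) ⊤) (ns jj)) (Z : Set C(K, ℝ)) :=
          hξ1 jj _
    _ ≤ dist ((T g : lp (fun _ : ℕ => C(K, ℝ)) ⊤) (ns jj)) 0 :=
          Metric.infDist_le_dist_of_mem Z.zero_mem
    _ = ‖(T g : lp (fun _ : ℕ => C(K, ℝ)) ⊤) (ns jj)‖ := dist_zero_right _
    _ ≤ ‖(T g : lp (fun _ : ℕ => C(K, ℝ)) ⊤)‖ :=
          lp.norm_apply_le_norm ENNReal.top_ne_zero _ _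
    _ = ‖T g‖ := rfl
    _ ≤ ‖T‖ * ‖g‖ := T.le_opNorm g
  have hnull : ∀ g : C(K, ℝ),
      Filter.Tendsto (fun jj => ζ jj g) Filter.atTop (nhds 0) := by
    intro g
    have hcomp : Filter.Tendsto
        (fun jj => Metric.infDist ((T g : lp (fun _ : ℕ => C(K, ℝ)) ⊤) (ns jj))
          (Z : Set C(K, ℝ))) Filter.atTop (nhds 0) := (htend g).comp hns_tend
    refine squeeze_zero_norm (fun jj => ?_) hcomp
    rw [hζ_apply, Real.norm_eq_abs]
    exact hξ1 jj _
  have hζval : ∀ jj, ε < ζ jj (f (ms jj)) := by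
    intro jj
    rw [hζ_apply, hξ2]
    exact hval0 jj
  -- clopen supports
  set η' : ℝ := ε / (2 * (R₀ + 1)) with hη'_def
  have hη'pos : 0 < η' := by positivity
  have hsupport : ∀ jj : ℕ, ∃ a : Set K, IsClopen a ∧
      {x : K | η' ≤ |f (ms jj) x|} ⊆ a ∧ a ⊆ {x : K | f (ms jj) x ≠ 0} := by
    intro jj
    refine exists_clopen_between ?_ ?_ ?_
    · refine IsClosed.isCompact ?_
      exact isClosed_le continuous_const (f (ms jj)).continuous.abs
    · have : IsOpen ((⇑(f (ms jj))) ⁻¹' ({0}ᶜ)) :=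
        (f (ms jj)).continuous.isOpen_preimage _ isClosed_singleton.isOpen_compl
      exact this
    · intro x hx
      simp only [Set.mem_setOf] at hx ⊢
      intro h0
      rw [h0] at hx
      simp at hx
      linarith
  choose aa haclopen haA haU using hsupport
  have hζu : ∀ jj, ε / 2 ≤ ζ jj (f (ms jj) * chi (aa jj)) := by
    intro jj
    have hdiffnorm : ‖f (ms jj) - f (ms jj) * chi (aa jj)‖ ≤ η' := by
      refine (ContinuousMap.norm_le _ hη'pos.le).mpr fun x => ?_
      rw [ContinuousMap.sub_apply, ContinuousMap.mul_apply]
      by_cases hx : x ∈ aa jj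
      · rw [chi_apply_mem (haclopen jj) hx, mul_one, sub_self, norm_zero]
        exact hη'pos.le
      · rw [chi_apply_not_mem (haclopen jj) hx, mul_zero, sub_zero]
        have hxA : x ∉ {x : K | η' ≤ |f (ms jj) x|} := fun hmem => hx (haA jj hmem)
        rw [Set.mem_setOf] at hxA
        rw [Real.norm_eq_abs]
        exact le_of_not_ge hxA
    have h1 : |ζ jj (f (ms jj)) - ζ jj (f (ms jj) * chi (aa jj))| ≤ R₀ * η' := by
      rw [← map_sub]
      calc |ζ jj (f (ms jj) - f (ms jj) * chi (aa jj))|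
          ≤ ‖ζ jj‖ * ‖f (ms jj) - f (ms jj) * chi (aa jj)‖ := (ζ jj).le_opNorm _
      _ ≤ R₀ * η' := mul_le_mul (hζnorm jj) hdiffnorm (norm_nonneg _) hR₀
    have h2 : R₀ * η' ≤ ε / 2 := by
      rw [hη'_def, mul_div_assoc']
      rw [div_le_div_iff₀ (by positivity) two_pos]
      nlinarith
    have h3 := hζval jj
    have h4 := abs_le.mp h1
    linarith [h4.1, h4.2]
  have hmass : ∀ jj, ∃ c : Set K, IsClopen c ∧ c ⊆ aa jj ∧
      (ε / 2) / (4 * C₀) ≤ |ζ jj (chi c)| := by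
    intro jj
    exact exists_clopen_mass (ζ jj) (f (ms jj)) (haclopen jj) hC₀pos (hfC₀ _)
      (by positivity) (hζu jj)
  choose cc hccclopen hccsub hccval using hmass
  have hccdisj : ∀ j1 j2, j1 ≠ j2 → Disjoint (cc j1) (cc j2) := by
    intro j1 j2 hne
    refine Set.disjoint_left.mpr fun x hx1 hx2 => ?_
    have hU1 : f (ms j1) x ≠ 0 := haU j1 (hccsub j1 hx1)
    have hU2 : f (ms j2) x ≠ 0 := haU j2 (hccsub j2 hx2)
    have hmne : ms j1 ≠ ms j2 := fun h => hne (hms_inj h)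
    have hzero := hdisj (ms j1) (ms j2) hmne
    have hx := congrArg (fun g : C(K, ℝ) => g x) hzero
    simp only [ContinuousMap.mul_apply, ContinuousMap.zero_apply] at hx
    rcases mul_eq_zero.mp hx with h | h
    · exact hU1 h
    · exact hU2 h
  set δ : ℝ := ε / (16 * C₀) with hδ_def
  have hδpos : 0 < δ := by positivity
  have hvalδ : ∀ jj, δ < |ζ jj (chi (cc jj))| := by
    intro jj
    refine lt_of_lt_of_le ?_ (hccval jj)
    rw [hδ_def, div_lt_div_iff₀ (by positivity) (by positivity)]
    nlinarith
  exact machine_false hsup hnull hδpos hζnorm hccclopen hccdisj hvalδ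

end
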